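/- arXiv:2308.08212 — 2 statements merged into one kernel-verified Lean document; each statement's English description precedes it below -/
import Mathlib

section
/- Let μ be a measure, 0 < p < 2, and let F, h be measurable complex-valued functions such that ∫ |F|^p dμ < ∞, ∫ |F|^{p-2}|h|² dμ < ∞, and μ({F = 0}) = 0. If ∫ |F + t·h|^p dμ ≥ ∫ |F|^p dμ for all t ∈ ℂ, then ∫ |F|^{p-2}·conj(F)·h dμ = 0. -/
open MeasureTheory ENNReal

lemma key_pt (p : ℝ) (hp0 : 0 < p) (hp2 : p ≤ 2) (a b : ℂ) (ha : a ≠ 0) :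
    ‖a + b‖ ^ p ≤ ‖a‖ ^ p
      + p * (‖a‖ ^ (p - 2) * ((starRingEnd ℂ) a * b).re)
      + p / 2 * (‖a‖ ^ (p - 2) * ‖b‖ ^ 2) := by
  set r := ‖a‖ with hr_def
  have hr : 0 < r := norm_pos_iff.mpr ha
  set D : ℝ := 2 * ((starRingEnd ℂ) a * b).re + ‖b‖ ^ 2 with hD_def
  have hsq : ‖a + b‖ ^ (2:ℕ) = r ^ (2:ℕ) + D := by
    rw [Complex.sq_norm, Complex.sq_norm, Complex.normSq_add, hD_def]
    simp [Complex.normSq_eq_norm_sq, Complex.mul_re, Complex.conj_re, Complex.conj_im]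
    ring
  have hr2 : (0:ℝ) < r ^ (2:ℕ) := by positivity
  have hu : -1 ≤ D / r ^ (2:ℕ) := by
    have h0 : (0:ℝ) ≤ r ^ (2:ℕ) + D := hsq ▸ sq_nonneg _
    rw [le_div_iff₀ hr2]; nlinarith
  have habp : ‖a + b‖ ^ p
      = (r ^ (2:ℕ) * (1 + D / r ^ (2:ℕ))) ^ (p / 2) := by
    rw [mul_add, mul_one, mul_div_cancel₀ _ hr2.ne', ← hsq]
    rw [← Real.rpow_natCast (‖a+b‖) 2, ← Real.rpow_mul (norm_nonneg _), show ((2:ℕ):ℝ) * (p/2) = p by push_cast; ring]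
  have hbern : (1 + D / r ^ (2:ℕ)) ^ (p / 2) ≤ 1 + (p/2) * (D / r ^ (2:ℕ)) :=
    rpow_one_add_le_one_add_mul_self hu (by linarith) (by linarith)
  have hmulrpow : (r ^ (2:ℕ) * (1 + D / r ^ (2:ℕ))) ^ (p / 2)
      = r ^ p * (1 + D / r ^ (2:ℕ)) ^ (p / 2) := by
    rw [Real.mul_rpow hr2.le (by linarith), ← Real.rpow_natCast r 2,
      ← Real.rpow_mul hr.le, show ((2:ℕ):ℝ) * (p/2) = p by push_cast; ring]
  have hrp : 0 < r ^ p := Real.rpow_pos_of_pos hr p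
  have hle : ‖a + b‖ ^ p ≤ r ^ p * (1 + (p/2) * (D / r ^ (2:ℕ))) := by
    rw [habp, hmulrpow]
    exact mul_le_mul_of_nonneg_left hbern hrp.le
  refine hle.trans (le_of_eq ?_)
  have hrp2 : r ^ (p - 2) = r ^ p / r ^ (2:ℕ) := by
    rw [Real.rpow_sub hr, ← Real.rpow_natCast r 2]; norm_num
  rw [hrp2, hD_def]
  field_simp
  ring

theorem stmt_6 {α : Type*} [MeasurableSpace α] (μ : Measure α) (p : ℝ)
    (hp0 : 0 < p) (hp2 : p < 2) (F h : α → ℂ) (hFm : Measurable F) (hhm : Measurable h)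
    (hFp : ∫⁻ x, ENNReal.ofReal (‖F x‖ ^ p) ∂μ < ⊤)
    (hh2 : ∫⁻ x, ENNReal.ofReal (‖F x‖ ^ (p - 2) * ‖h x‖ ^ 2) ∂μ < ⊤)
    (hF0 : μ {x | F x = 0} = 0)
    (hmin : ∀ t : ℂ,
      ∫⁻ x, ENNReal.ofReal (‖F x‖ ^ p) ∂μ
        ≤ ∫⁻ x, ENNReal.ofReal (‖F x + t * h x‖ ^ p) ∂μ) :
    ∫ x, ((‖F x‖ ^ (p - 2) : ℝ) : ℂ) * (starRingEnd ℂ) (F x) * h x ∂μ = 0 := by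
  have hFne : ∀ᵐ x ∂μ, F x ≠ 0 := by
    rw [ae_iff]; simpa using hF0
  set w : α → ℝ := fun x => ‖F x‖ ^ (p - 2) * ‖h x‖ ^ 2 with hw_def
  set fC : α → ℂ := fun x =>
    ((‖F x‖ ^ (p - 2) : ℝ) : ℂ) * (starRingEnd ℂ) (F x) * h x with hfC_def
  have hmabsF : Measurable fun x => ‖F x‖ := continuous_norm.measurable.comp hFm
  have hmabsh : Measurable fun x => ‖h x‖ := continuous_norm.measurable.comp hhm
  have hmFp : Measurable fun x => ‖F x‖ ^ p := hmabsF.pow measurable_const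
  have hmFp2 : Measurable fun x => ‖F x‖ ^ (p - 2) := hmabsF.pow measurable_const
  have hmw : Measurable w := hmFp2.mul (hmabsh.pow measurable_const)
  have hmconj : Measurable fun x => (starRingEnd ℂ) (F x) :=
    Complex.continuous_conj.measurable.comp hFm
  have hmfC : Measurable fC :=
    ((Complex.measurable_ofReal.comp hmFp2).mul hmconj).mul hhm
  have hFp_int : Integrable (fun x => ‖F x‖ ^ p) μ := by
    refine ⟨hmFp.aestronglyMeasurable, ?_⟩
    rw [hasFiniteIntegral_iff_ofReal (ae_of_all _ fun x => by positivity)]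
    exact hFp
  have hw_int : Integrable w μ := by
    refine ⟨hmw.aestronglyMeasurable, ?_⟩
    rw [hasFiniteIntegral_iff_ofReal (ae_of_all _ fun x => by positivity)]
    exact hh2
  have hfC_int : Integrable fC μ := by
    refine Integrable.mono' (hFp_int.add hw_int) hmfC.aestronglyMeasurable ?_
    filter_upwards [hFne] with x hx
    have hs : 0 < ‖F x‖ := norm_pos_iff.mpr hx
    set s := ‖F x‖
    have e2 : s ^ p = s ^ (p/2) * s ^ (p/2) := by
      rw [← Real.rpow_add hs]; ring_nf
    have e3 : s ^ (p-2) = s ^ ((p-2)/2) * s ^ ((p-2)/2) := by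
      rw [← Real.rpow_add hs]; ring_nf
    have e1 : s ^ (p-2) * s = s ^ (p/2) * s ^ ((p-2)/2) := by
      rw [← Real.rpow_add_one hs.ne' (p-2), ← Real.rpow_add hs]; ring_nf
    have hnorm : ‖fC x‖ = s ^ (p-2) * s * ‖h x‖ := by
      simp [hfC_def, map_mul, abs_of_nonneg (Real.rpow_nonneg (norm_nonneg _) _),
        mul_assoc]; rfl
    have h2 := sq_nonneg (s ^ (p/2) - s ^ ((p-2)/2) * ‖h x‖)
    simp only [Pi.add_apply]
    rw [hnorm]
    show s ^ (p - 2) * s * ‖h x‖ ≤ s ^ p + s ^ (p - 2) * ‖h x‖ ^ 2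
    rw [e1, e2, e3]
    nlinarith [norm_nonneg (h x), Real.rpow_nonneg (norm_nonneg (F x)) (p/2),
      Real.rpow_nonneg (norm_nonneg (F x)) ((p-2)/2),
      mul_nonneg (mul_nonneg (Real.rpow_nonneg (norm_nonneg (F x)) (p/2))
        (Real.rpow_nonneg (norm_nonneg (F x)) ((p-2)/2))) (norm_nonneg (h x))]
  set G : ℂ := ∫ x, fC x ∂μ with hG_def
  set C : ℝ := ∫ x, w x ∂μ with hC_def
  have hC_nn : 0 ≤ C := integral_nonneg fun x => by positivity
  have key : ∀ t : ℂ, 0 ≤ p * (t * G).re + p / 2 * ‖t‖ ^ 2 * C := by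
    intro t
    set g : α → ℝ := fun x =>
      ‖F x‖ ^ p + p * (t * fC x).re + p / 2 * ‖t‖ ^ 2 * w x with hg_def
    have hre_int : Integrable (fun x => (t * fC x).re) μ := (hfC_int.const_mul t).re
    have hg_int : Integrable g μ :=
      (hFp_int.add (hre_int.const_mul p)).add (hw_int.const_mul _)
    have hpt : ∀ᵐ x ∂μ, ‖F x + t * h x‖ ^ p ≤ g x := by
      filter_upwards [hFne] with x hx
      have := key_pt p hp0 hp2.le (F x) (t * h x) hx
      refine this.trans (le_of_eq ?_)
      have hre : ‖F x‖ ^ (p-2) * ((starRingEnd ℂ) (F x) * (t * h x)).re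
          = (t * fC x).re := by
        have : t * fC x = ((‖F x‖ ^ (p-2) : ℝ) : ℂ)
            * ((starRingEnd ℂ) (F x) * (t * h x)) := by rw [hfC_def]; ring
        rw [this, Complex.re_ofReal_mul]
      have habs : ‖t * h x‖ ^ 2 = ‖t‖ ^ 2 * ‖h x‖ ^ 2 := by
        rw [norm_mul, mul_pow]
      rw [hg_def]
      simp only [← hre, habs, hw_def]
      ring
    have hg_nn : 0 ≤ᵐ[μ] g := by
      filter_upwards [hpt] with x hx
      exact le_trans (by positivity) hx
    have h1 : ENNReal.ofReal (∫ x, ‖F x‖ ^ p ∂μ) ≤ ENNReal.ofReal (∫ x, g x ∂μ) := by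
      rw [ofReal_integral_eq_lintegral_ofReal hFp_int (ae_of_all _ fun x => by positivity),
        ofReal_integral_eq_lintegral_ofReal hg_int hg_nn]
      exact (hmin t).trans (lintegral_mono_ae (hpt.mono fun x hx => ENNReal.ofReal_le_ofReal hx))
    have h2 : ∫ x, ‖F x‖ ^ p ∂μ ≤ ∫ x, g x ∂μ :=
      (ENNReal.ofReal_le_ofReal_iff (integral_nonneg_of_ae hg_nn)).mp h1
    have hsplit : ∫ x, g x ∂μ = (∫ x, ‖F x‖ ^ p ∂μ)
        + p * ((t * G).re) + p / 2 * ‖t‖ ^ 2 * C := by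
      have hi1 : Integrable (fun x => ‖F x‖ ^ p + p * (t * fC x).re) μ :=
        hFp_int.add (hre_int.const_mul p)
      have hi2 : Integrable (fun x => p / 2 * ‖t‖ ^ 2 * w x) μ :=
        hw_int.const_mul _
      have hic : Integrable (fun x => t * fC x) μ := hfC_int.const_mul t
      have hire : ∫ x, (t * fC x).re ∂μ = (t * G).re := by
        rw [hG_def, ← integral_const_mul]
        simpa using integral_re hic
      rw [hg_def]
      rw [integral_add hi1 hi2, integral_add hFp_int (hre_int.const_mul p),
        integral_const_mul, integral_const_mul, hire]
    rw [hsplit] at h2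
    linarith
  -- conclude G = 0
  by_contra hG
  have hN : 0 < Complex.normSq G := Complex.normSq_pos.mpr hG
  set s : ℝ := 1 / (C + 1) with hs_def
  have hs : 0 < s := by positivity
  have := key (-(s : ℂ) * (starRingEnd ℂ) G)
  have hre : ((-(s : ℂ) * (starRingEnd ℂ) G) * G).re = -s * Complex.normSq G := by
    have : (-(s : ℂ) * (starRingEnd ℂ) G) * G = ((-s : ℝ) : ℂ) * ((Complex.normSq G : ℝ) : ℂ) := by
      rw [show (-(s:ℂ) * (starRingEnd ℂ) G) * G = -(s:ℂ) * (G * (starRingEnd ℂ) G) by ring,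
        Complex.mul_conj]
      push_cast; ring
    rw [this, ← Complex.ofReal_mul]
    simp
  have habs : ‖-(s : ℂ) * (starRingEnd ℂ) G‖ ^ 2 = s ^ 2 * Complex.normSq G := by
    rw [norm_mul, mul_pow, ← Complex.sq_norm G]
    simp [Complex.norm_conj, abs_of_pos hs, Complex.sq_norm]
  rw [hre, habs] at this
  have hsC : s * C ≤ 1 := by
    rw [hs_def, div_mul_eq_mul_div, div_le_one (by linarith)]
    linarith
  nlinarith [mul_pos hs hN, mul_pos hp0 (mul_pos hs hN)]
end

section
/- Let μ be a measure, 0 < p < 2, F measurable with ∫|F|^p dμ < ∞, μ({F=0}) = 0, and ν = |F|^{p-2} dμ. For every t ∈ ℂ and every h ∈ L²(ν): ∫ |F + th|^p dμ ≤ ∫ |F|^p dμ + p·Re(t·∫ |F|^{p-2}conj(F)h dμ) + (p/2)|t|²·∫ |h|² dν. -/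
open MeasureTheory ENNReal

lemma ptwise_aux {p : ℝ} (hp0 : 0 < p) (hp2 : p < 2) (z v : ℂ) (hz : z ≠ 0) :
    ‖z + v‖ ^ p ≤ ‖z‖ ^ p
      + p * (‖z‖ ^ (p - 2) * ((starRingEnd ℂ) z * v).re)
      + (p / 2) * (‖z‖ ^ (p - 2) * ‖v‖ ^ 2) := by
  set a := ‖z‖ with ha_def
  have ha : 0 < a := norm_pos_iff.mpr hz
  set s : ℝ := (2 * ((starRingEnd ℂ) z * v).re + ‖v‖ ^ 2) / a ^ 2 with hs_def
  have hre : (z * (starRingEnd ℂ) v).re = ((starRingEnd ℂ) z * v).re := by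
    simp only [Complex.mul_re, Complex.conj_re, Complex.conj_im]; ring
  have h1 : ‖z + v‖ ^ 2 = a ^ 2 * (1 + s) := by
    rw [hs_def]
    field_simp
    rw [Complex.sq_norm, Complex.sq_norm, Complex.sq_norm, Complex.normSq_add, hre]
    simp [Complex.mul_re]
    ring
  have hs1 : (0:ℝ) ≤ 1 + s := by
    nlinarith [sq_nonneg (‖z + v‖), pow_pos ha 2, h1]
  have key : ‖z + v‖ ^ p = (a ^ 2 * (1 + s)) ^ (p / 2) := by
    rw [← h1, ← Real.rpow_natCast (‖z+v‖) 2, ← Real.rpow_mul (norm_nonneg _)]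
    norm_num
    congr 1
    ring
  rw [key, Real.mul_rpow (by positivity) hs1]
  have hbern : (1 + s) ^ (p / 2) ≤ 1 + (p / 2) * s :=
    rpow_one_add_le_one_add_mul_self (by linarith) (by linarith) (by linarith)
  have ha2 : (a ^ 2 : ℝ) ^ (p / 2) = a ^ p := by
    rw [← Real.rpow_natCast a 2, ← Real.rpow_mul ha.le]
    norm_num
    congr 1
    ring
  rw [ha2]
  have hap : (0:ℝ) ≤ a ^ p := Real.rpow_nonneg ha.le p
  calc a ^ p * (1 + s) ^ (p / 2) ≤ a ^ p * (1 + (p / 2) * s) :=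
        mul_le_mul_of_nonneg_left hbern hap
    _ = a ^ p + (p / 2) * (a ^ p * s) := by ring
    _ = a ^ p + p * (a ^ (p - 2) * ((starRingEnd ℂ) z * v).re)
        + (p / 2) * (a ^ (p - 2) * ‖v‖ ^ 2) := by
        have : a ^ p * s = a ^ (p - 2) * (2 * ((starRingEnd ℂ) z * v).re + ‖v‖ ^ 2) := by
          rw [hs_def]
          rw [show a ^ (p - 2) = a ^ p / a ^ 2 by
            rw [← Real.rpow_natCast a 2, ← Real.rpow_sub ha]; norm_num]
          field_simp
        rw [this]; ring

/-- Integrated form of the pointwise inequality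
`|F+th|^p ≤ |F|^p + p|F|^{p-2} Re(t·conj(F)h) + (p/2)|t|²|F|^{p-2}|h|²`,
where `ν = |F|^{p-2} dμ`. -/
theorem stmt_19 {α : Type*} [MeasurableSpace α] (μ : Measure α) (p : ℝ)
    (hp0 : 0 < p) (hp2 : p < 2) (F h : α → ℂ) (hFm : Measurable F) (hhm : Measurable h)
    (hFp : Integrable (fun x => ‖F x‖ ^ p) μ)
    (hF0 : μ {x | F x = 0} = 0)
    (hh2 : MemLp h 2 (μ.withDensity fun x => ENNReal.ofReal (‖F x‖ ^ (p - 2))))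
    (t : ℂ) :
    ∫ x, ‖F x + t * h x‖ ^ p ∂μ ≤
      (∫ x, ‖F x‖ ^ p ∂μ)
        + p * (t * ∫ x, ((‖F x‖ ^ (p - 2) : ℝ) : ℂ)
            * (starRingEnd ℂ) (F x) * h x ∂μ).re
        + (p / 2) * ‖t‖ ^ 2
          * ∫ x, ‖h x‖ ^ 2
              ∂(μ.withDensity fun x => ENNReal.ofReal (‖F x‖ ^ (p - 2))) := by
  -- notation
  have habs : Measurable fun x => ‖F x‖ := hFm.norm
  have hw_meas : Measurable fun x => ‖F x‖ ^ (p - 2) := by fun_prop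
  have hw_nonneg : ∀ x, 0 ≤ ‖F x‖ ^ (p - 2) := fun x =>
    Real.rpow_nonneg (norm_nonneg _) _
  have hwnn_meas : Measurable fun x => (‖F x‖ ^ (p - 2)).toNNReal :=
    measurable_real_toNNReal.comp hw_meas
  have hν : (μ.withDensity fun x => ENNReal.ofReal (‖F x‖ ^ (p - 2)))
      = μ.withDensity fun x => ((‖F x‖ ^ (p - 2)).toNNReal : ℝ≥0∞) := rfl
  -- a.e. F ≠ 0
  have hFne : ∀ᵐ x ∂μ, F x ≠ 0 := by
    rw [ae_iff]; simpa using hF0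
  -- |h|² integrable over ν
  have hnorm : MemLp (fun x => ‖h x‖) 2
      (μ.withDensity fun x => ENNReal.ofReal (‖F x‖ ^ (p - 2))) := by
    simpa using hh2.norm
  have hI2ν : Integrable (fun x => ‖h x‖ ^ 2)
      (μ.withDensity fun x => ENNReal.ofReal (‖F x‖ ^ (p - 2))) :=
    hnorm.integrable_sq
  -- transfer to μ
  have hI2 : Integrable (fun x => ‖F x‖ ^ (p - 2) * ‖h x‖ ^ 2) μ := by
    have h0 := (integrable_withDensity_iff_integrable_smul hwnn_meas).1 (hν ▸ hI2ν)
    refine h0.congr (Filter.Eventually.of_forall fun x => ?_)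
    simp [NNReal.smul_def, Real.coe_toNNReal _ (hw_nonneg x)]
  have hint2 : (∫ x, ‖h x‖ ^ 2
        ∂(μ.withDensity fun x => ENNReal.ofReal (‖F x‖ ^ (p - 2))))
      = ∫ x, ‖F x‖ ^ (p - 2) * ‖h x‖ ^ 2 ∂μ := by
    rw [hν, integral_withDensity_eq_integral_smul hwnn_meas]
    refine integral_congr_ae (Filter.Eventually.of_forall fun x => ?_)
    simp [NNReal.smul_def, Real.coe_toNNReal _ (hw_nonneg x)]
  -- MemLp facts for the middle term
  have hMF : MemLp (fun x => ‖F x‖ ^ (p / 2)) 2 μ := by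
    rw [memLp_two_iff_integrable_sq (by fun_prop : Measurable fun x =>
      ‖F x‖ ^ (p / 2)).aestronglyMeasurable]
    refine hFp.congr (Filter.Eventually.of_forall fun x => ?_)
    show ‖F x‖ ^ p = (‖F x‖ ^ (p / 2)) ^ 2
    rw [← Real.rpow_natCast (‖F x‖ ^ (p / 2)) 2,
      ← Real.rpow_mul (norm_nonneg _)]
    norm_num
  have habsh : Measurable fun x => ‖h x‖ := hhm.norm
  have hMG : MemLp (fun x => ‖F x‖ ^ ((p - 2) / 2) * ‖h x‖) 2 μ := by
    rw [memLp_two_iff_integrable_sq (f := fun x => ‖F x‖ ^ ((p - 2) / 2) * ‖h x‖) ((by fun_prop : Measurable fun x =>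
      ‖F x‖ ^ ((p - 2) / 2)).mul habsh).aestronglyMeasurable]
    refine hI2.congr (Filter.Eventually.of_forall fun x => ?_)
    show _ = (‖F x‖ ^ ((p - 2) / 2) * ‖h x‖) ^ 2
    rw [mul_pow, ← Real.rpow_natCast (‖F x‖ ^ ((p - 2) / 2)) 2,
      ← Real.rpow_mul (norm_nonneg _)]
    norm_num
  have hProd : Integrable (fun x => ‖F x‖ ^ (p / 2)
      * (‖F x‖ ^ ((p - 2) / 2) * ‖h x‖)) μ := by
    have hm := hMG.smul (𝕜 := ℝ) hMF (p := 2) (q := 2) (r := 1)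
      (hpqr := ⟨by rw [inv_one]; exact ENNReal.inv_two_add_inv_two⟩)
    rw [memLp_one_iff_integrable] at hm
    refine hm.congr (Filter.Eventually.of_forall fun x => ?_)
    simp [smul_eq_mul]
  -- the complex integrand
  have hg_meas : Measurable fun x => ((‖F x‖ ^ (p - 2) : ℝ) : ℂ)
      * (starRingEnd ℂ) (F x) * h x := by
    exact ((Complex.measurable_ofReal.comp hw_meas).mul
      (Complex.continuous_conj.measurable.comp hFm)).mul hhm
  have hg_int : Integrable (fun x => ((‖F x‖ ^ (p - 2) : ℝ) : ℂ)
      * (starRingEnd ℂ) (F x) * h x) μ := by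
    refine hProd.mono' hg_meas.aestronglyMeasurable ?_
    filter_upwards [hFne] with x hx
    have ha : 0 < ‖F x‖ := norm_pos_iff.mpr hx
    have : ‖((‖F x‖ ^ (p - 2) : ℝ) : ℂ) * (starRingEnd ℂ) (F x) * h x‖
        = ‖F x‖ ^ (p - 2) * ‖F x‖ * ‖h x‖ := by
      simp [norm_mul, Complex.norm_real, Real.norm_eq_abs,
        abs_of_nonneg (hw_nonneg x)]
    rw [this]
    have e : ‖F x‖ ^ (p - 2) * ‖F x‖
        = ‖F x‖ ^ (p - 1) := by
      nth_rewrite 2 [← Real.rpow_one (‖F x‖)]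
      rw [← Real.rpow_add ha]; congr 1; ring
    have e' : ‖F x‖ ^ (p / 2) * ‖F x‖ ^ ((p - 2) / 2)
        = ‖F x‖ ^ (p - 1) := by
      rw [← Real.rpow_add ha]; congr 1; ring
    rw [e, ← e', mul_assoc]
  -- middle term integrable (real part)
  have hmid : Integrable (fun x => (t * (((‖F x‖ ^ (p - 2) : ℝ) : ℂ)
      * (starRingEnd ℂ) (F x) * h x)).re) μ := by
    have := (hg_int.const_mul t).re
    simpa using this
  -- full RHS integrand
  set R : α → ℝ := fun x => ‖F x‖ ^ p
      + p * (t * (((‖F x‖ ^ (p - 2) : ℝ) : ℂ)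
          * (starRingEnd ℂ) (F x) * h x)).re
      + (p / 2) * ‖t‖ ^ 2
          * (‖F x‖ ^ (p - 2) * ‖h x‖ ^ 2) with hR_def
  have hB : Integrable (fun x => p * (t * (((‖F x‖ ^ (p - 2) : ℝ) : ℂ)
      * (starRingEnd ℂ) (F x) * h x)).re) μ := hmid.const_mul p
  have hC : Integrable (fun x => (p / 2) * ‖t‖ ^ 2
      * (‖F x‖ ^ (p - 2) * ‖h x‖ ^ 2)) μ := hI2.const_mul _
  have hAB : Integrable (fun x => ‖F x‖ ^ p
      + p * (t * (((‖F x‖ ^ (p - 2) : ℝ) : ℂ)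
          * (starRingEnd ℂ) (F x) * h x)).re) μ := hFp.add hB
  have hR_int : Integrable R μ := hAB.add hC
  -- pointwise a.e. bound
  have hpt : ∀ᵐ x ∂μ, ‖F x + t * h x‖ ^ p ≤ R x := by
    filter_upwards [hFne] with x hx
    have hkey := ptwise_aux hp0 hp2 (F x) (t * h x) hx
    simp only [hR_def]
    have e1 : (t * (((‖F x‖ ^ (p - 2) : ℝ) : ℂ)
        * (starRingEnd ℂ) (F x) * h x)).re
        = ‖F x‖ ^ (p - 2) * ((starRingEnd ℂ) (F x) * (t * h x)).re := by
      rw [show t * (((‖F x‖ ^ (p - 2) : ℝ) : ℂ) * (starRingEnd ℂ) (F x) * h x)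
        = ((‖F x‖ ^ (p - 2) : ℝ) : ℂ) * ((starRingEnd ℂ) (F x) * (t * h x)) by ring]
      exact Complex.re_ofReal_mul _ _
    have e2 : ‖t * h x‖ ^ 2 = ‖t‖ ^ 2 * ‖h x‖ ^ 2 := by
      rw [norm_mul, mul_pow]
    calc ‖F x + t * h x‖ ^ p
        ≤ ‖F x‖ ^ p
          + p * (‖F x‖ ^ (p - 2) * ((starRingEnd ℂ) (F x) * (t * h x)).re)
          + (p / 2) * (‖F x‖ ^ (p - 2) * ‖t * h x‖ ^ 2) := hkey
      _ = _ := by rw [e1, e2]; ring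
  -- LHS integrable
  have hA_meas : AEStronglyMeasurable (fun x => ‖F x + t * h x‖ ^ p) μ := by
    have hm1 : Measurable fun x => ‖F x + t * h x‖ :=
      (hFm.add (hhm.const_mul t)).norm
    exact ((by measurability : Measurable fun y : ℝ => y ^ p).comp hm1).aestronglyMeasurable
  have hA_int : Integrable (fun x => ‖F x + t * h x‖ ^ p) μ := by
    refine hR_int.mono' hA_meas ?_
    filter_upwards [hpt] with x hx
    rwa [Real.norm_of_nonneg (Real.rpow_nonneg (norm_nonneg _) _)]
  -- conclude
  have hle := integral_mono_ae hA_int hR_int hpt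
  refine hle.trans_eq ?_
  simp only [hR_def]
  rw [integral_add hAB hC, integral_add hFp hB, integral_const_mul, integral_const_mul]
  congr 1
  · congr 1
    -- p * ∫ (t*g).re = p * (t * ∫ g).re
    congr 1
    have h1 : (∫ x, (t * (((‖F x‖ ^ (p - 2) : ℝ) : ℂ)
        * (starRingEnd ℂ) (F x) * h x)).re ∂μ)
        = (∫ x, t * (((‖F x‖ ^ (p - 2) : ℝ) : ℂ)
          * (starRingEnd ℂ) (F x) * h x) ∂μ).re := by
      have := integral_re (𝕜 := ℂ) (hg_int.const_mul t)
      simpa using this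
    rw [h1, integral_const_mul]
  · rw [hint2, mul_assoc]
end
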